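/- For every n, k ∈ ℕ and 0 < p < 1, there exists a constant c = c(n,k,p) > 0 such that for every finite Borel measure μ on ℝⁿ and every γ > 0, for μ-almost every x ∈ ℝⁿ one has liminf_{l→∞} (1/l) · #{ j ∈ {1,…,l} : μ(B(x, γ k^{-j})) ≥ c · μ(B(x, γ k^{-j+1})) } ≥ p. (In fact c = k^{-2n/(1-p)} works.) -/

import Mathlib

open MeasureTheory Metric Filter Set
open scoped Classical ENNReal

open scoped Topology

/-- liminf comparison helper. -/
lemma stmt0_liminf_aux {f g : ℕ → ℝ} {a p : ℝ} (hfg : ∀ᶠ l in atTop, f l ≤ g l)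
    (hf : Tendsto f atTop (𝓝 a)) (hg1 : ∀ᶠ l in atTop, g l ≤ 1) (hpa : p ≤ a) :
    p ≤ liminf g atTop := by
  have h1 : liminf f atTop = a := hf.liminf_eq
  calc p ≤ a := hpa
    _ = liminf f atTop := h1.symm
    _ ≤ liminf g atTop :=
      liminf_le_liminf hfg hf.isBoundedUnder_ge
        ((isBoundedUnder_of_eventually_le hg1).isCoboundedUnder_ge)

/-- Besicovitch differentiation: a.e. lower bound on measures of small balls. -/
lemma stmt0_besicovitch_aux (n : ℕ) (μ : Measure (EuclideanSpace ℝ (Fin n)))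
    [IsFiniteMeasure μ] :
    ∀ᵐ x ∂μ, ∃ D : ℝ, 0 < D ∧ ∃ r0 : ℝ, 0 < r0 ∧ ∀ r : ℝ, 0 < r → r ≤ r0 →
      ENNReal.ofReal (D * r ^ n) ≤ μ (closedBall x r) := by
  filter_upwards [Besicovitch.ae_tendsto_rnDeriv volume μ, Measure.rnDeriv_lt_top volume μ]
    with x hx hlt
  set L := volume.rnDeriv μ x with hLdef
  have hLtop : L + 1 ≠ ∞ := by
    simp [ENNReal.add_ne_top, hlt.ne]
  have hL1 : L < L + 1 := ENNReal.lt_add_right hlt.ne one_ne_zero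
  have hev := hx.eventually_lt_const hL1
  rw [eventually_nhdsWithin_iff, Metric.eventually_nhds_iff] at hev
  obtain ⟨ε, hε, hev⟩ := hev
  set v₁ := volume (ball (0 : EuclideanSpace ℝ (Fin n)) 1) with hv₁def
  have hv₁0 : v₁ ≠ 0 := (measure_ball_pos volume _ one_pos).ne'
  have hv₁top : v₁ ≠ ∞ := measure_ball_lt_top.ne
  set W := v₁ / (L + 1) with hWdef
  have hW0 : W ≠ 0 := (ENNReal.div_pos hv₁0 hLtop).ne'
  have hWtop : W ≠ ∞ := (ENNReal.div_lt_top hv₁top (by simp)).ne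
  refine ⟨W.toReal, ENNReal.toReal_pos hW0 hWtop, ε / 2, half_pos hε, fun r hr hrε => ?_⟩
  have hratio : volume (closedBall x r) / μ (closedBall x r) < L + 1 := by
    apply hev
    · rw [Real.dist_eq, sub_zero, abs_of_pos hr]
      linarith
    · exact hr
  have hvol : volume (closedBall x r) = ENNReal.ofReal (r ^ n) * v₁ := by
    have h := Measure.addHaar_closedBall volume x hr.le
    rwa [finrank_euclideanSpace_fin] at h
  have hm0 : μ (closedBall x r) ≠ 0 := by
    intro h0
    rw [h0, ENNReal.div_zero] at hratio
    · exact (hratio.trans_le le_top).false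
    · rw [hvol]
      exact mul_ne_zero (by simp [ENNReal.ofReal_eq_zero, not_le, pow_pos hr]) hv₁0
  have hmtop : μ (closedBall x r) ≠ ∞ := measure_ne_top μ _
  have hv_le : volume (closedBall x r) ≤ (L + 1) * μ (closedBall x r) := by
    rw [← ENNReal.div_le_iff_le_mul (Or.inl hm0) (Or.inl hmtop)]
    exact hratio.le
  calc ENNReal.ofReal (W.toReal * r ^ n)
      = ENNReal.ofReal (r ^ n) * W := by
        rw [ENNReal.ofReal_mul ENNReal.toReal_nonneg, ENNReal.ofReal_toReal hWtop, mul_comm]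
    _ = volume (closedBall x r) / (L + 1) := by
        rw [hWdef, ← mul_div_assoc, ← hvol]
    _ ≤ ((L + 1) * μ (closedBall x r)) / (L + 1) := ENNReal.div_le_div_right hv_le _
    _ = μ (closedBall x r) := by
        rw [mul_comm, mul_div_assoc, ENNReal.div_self (by simp) hLtop, mul_one]

/-- The main pointwise estimate, for `2 ≤ k`, at a point where small balls have
polynomial lower mass bounds. -/
lemma stmt0_pointwise (n k : ℕ) (hk : 2 ≤ k) (p : ℝ) (hp : 0 < p) (hp1 : p < 1)
    (c : ℝ) (hc : 0 < c) (hE0 : 0 < -Real.log c)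
    (hE : (n : ℝ) * Real.log k ≤ (1 - p) * (-Real.log c))
    (μ : Measure (EuclideanSpace ℝ (Fin n))) [IsFiniteMeasure μ] (γ : ℝ) (hγ : 0 < γ)
    (x : EuclideanSpace ℝ (Fin n))
    (D : ℝ) (hD : 0 < D) (r0 : ℝ) (hr0 : 0 < r0)
    (hlow : ∀ r : ℝ, 0 < r → r ≤ r0 → ENNReal.ofReal (D * r ^ n) ≤ μ (closedBall x r)) :
    p ≤ liminf (fun l : ℕ =>
      (((Finset.Icc 1 l).filter (fun j : ℕ =>
        ENNReal.ofReal c * μ (closedBall x (γ * (k : ℝ) ^ (-(j : ℤ) + 1)))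
          ≤ μ (closedBall x (γ * (k : ℝ) ^ (-(j : ℤ)))))).card : ℝ) / (l : ℝ)) atTop := by
  have hk0 : (0 : ℝ) < k := by positivity
  have hk1 : (1 : ℝ) ≤ k := by exact_mod_cast Nat.one_le_of_lt hk
  set P : ℕ → Prop := fun j =>
    ENNReal.ofReal c * μ (closedBall x (γ * (k : ℝ) ^ (-(j : ℤ) + 1)))
      ≤ μ (closedBall x (γ * (k : ℝ) ^ (-(j : ℤ)))) with hPdef
  set good : ℕ → ℕ := fun l => ((Finset.Icc 1 l).filter P).card with hgooddef
  set m : ℕ → ℝ := fun j => (μ (closedBall x (γ * (k : ℝ) ^ (-(j : ℤ))))).toReal with hmdef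
  have hrad : ∀ j : ℕ, 0 < γ * (k : ℝ) ^ (-(j : ℤ)) := fun j =>
    mul_pos hγ (zpow_pos hk0 _)
  have hμeq : ∀ j : ℕ, μ (closedBall x (γ * (k : ℝ) ^ (-(j : ℤ)))) = ENNReal.ofReal (m j) :=
    fun j => (ENNReal.ofReal_toReal (measure_ne_top μ _)).symm
  have hmnonneg : ∀ j, 0 ≤ m j := fun j => ENNReal.toReal_nonneg
  have hanti : ∀ i j : ℕ, i ≤ j → m j ≤ m i := by
    intro i j hij
    apply ENNReal.toReal_mono (measure_ne_top μ _)
    apply measure_mono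
    apply closedBall_subset_closedBall
    exact mul_le_mul_of_nonneg_left
      (zpow_le_zpow_right₀ hk1 (by exact_mod_cast Int.neg_le_neg (by exact_mod_cast hij)))
      hγ.le
  have hlowm : ∀ l : ℕ, γ * (k : ℝ) ^ (-(l : ℤ)) ≤ r0 →
      D * (γ * (k : ℝ) ^ (-(l : ℤ))) ^ n ≤ m l := by
    intro l hl
    have := hlow _ (hrad l) hl
    rwa [ENNReal.ofReal_le_iff_le_toReal (measure_ne_top μ _)] at this
  -- eventually small radii
  obtain ⟨N, hN⟩ : ∃ N : ℕ, γ / r0 < (k : ℝ) ^ N :=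
    pow_unbounded_of_one_lt _ (by exact_mod_cast Nat.lt_of_lt_of_le Nat.one_lt_two hk)
  have hsmall : ∀ l : ℕ, N ≤ l → γ * (k : ℝ) ^ (-(l : ℤ)) ≤ r0 := by
    intro l hl
    have hklpos : (0 : ℝ) < (k : ℝ) ^ l := by positivity
    have h1 : γ / r0 < (k : ℝ) ^ l :=
      hN.trans_le (pow_le_pow_right₀ hk1 hl)
    have h2 : γ < r0 * (k : ℝ) ^ l := by
      rw [div_lt_iff₀ hr0] at h1
      linarith [h1]
    rw [zpow_neg, zpow_natCast]
    rw [mul_inv_le_iff₀ hklpos]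
    nlinarith
  have hmpos : ∀ j : ℕ, 0 < m j := by
    intro j
    have h1 : D * (γ * (k : ℝ) ^ (-((max j N : ℕ) : ℤ))) ^ n ≤ m (max j N) :=
      hlowm _ (hsmall _ (le_max_right _ _))
    have h2 : 0 < D * (γ * (k : ℝ) ^ (-((max j N : ℕ) : ℤ))) ^ n := by
      have := hrad (max j N); positivity
    exact lt_of_lt_of_le (lt_of_lt_of_le h2 h1) (hanti _ _ (le_max_left _ _))
  have hgood_le : ∀ l, good l ≤ l := by
    intro l
    refine (Finset.card_filter_le _ _).trans ?_
    simp [Nat.card_Icc]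
  -- the characterization of P (l+1) in terms of m
  have hPiff : ∀ l : ℕ, P (l + 1) ↔ c * m l ≤ m (l + 1) := by
    intro l
    have hexp : (-(((l : ℕ) + 1 : ℕ) : ℤ) + 1) = -(l : ℤ) := by push_cast; ring
    rw [hPdef]
    simp only
    rw [hexp, hμeq l, hμeq (l + 1), ← ENNReal.ofReal_mul hc.le]
    exact ENNReal.ofReal_le_ofReal_iff (hmnonneg (l + 1))
  -- key induction
  have hkey : ∀ l : ℕ, m l ≤ c ^ (l - good l) * m 0 := by
    intro l
    induction l with
    | zero => simp [hgooddef]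
    | succ l ih =>
      have hIcc : Finset.Icc 1 (l + 1) = insert (l + 1) (Finset.Icc 1 l) :=
        (Finset.insert_Icc_right_eq_Icc_add_one (by omega)).symm
      have hnotmem : (l + 1) ∉ Finset.Icc 1 l := by simp
      by_cases hP : P (l + 1)
      · have hgood : good (l + 1) = good l + 1 := by
          rw [hgooddef]
          simp only [hIcc, Finset.filter_insert, if_pos hP]
          rw [Finset.card_insert_of_notMem (fun h => hnotmem (Finset.mem_of_mem_filter _ h))]
        rw [hgood]
        have he : l + 1 - (good l + 1) = l - good l := by omega
        rw [he]
        exact (hanti l (l + 1) (Nat.le_succ l)).trans ih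
      · have hgood : good (l + 1) = good l := by
          rw [hgooddef]
          simp only [hIcc, Finset.filter_insert, if_neg hP]
        have hstep : m (l + 1) < c * m l := by
          have := (hPiff l).not.mp hP
          exact lt_of_not_ge this
        have he : l + 1 - good (l + 1) = (l - good l) + 1 := by
          have := hgood_le l
          omega
        rw [he, pow_succ]
        calc m (l + 1) ≤ c * m l := hstep.le
          _ ≤ c * (c ^ (l - good l) * m 0) := by
              exact mul_le_mul_of_nonneg_left ih hc.le
          _ = c ^ (l - good l) * c * m 0 := by ring
  -- pass to logarithms
  set E : ℝ := -Real.log c with hEdef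
  set C : ℝ := Real.log (m 0) - Real.log D - (n : ℝ) * Real.log γ with hCdef
  have hbad_bound : ∀ l : ℕ, N ≤ l →
      ((l - good l : ℕ) : ℝ) * E ≤ C + (n : ℝ) * Real.log k * l := by
    intro l hl
    have h1 : D * (γ * (k : ℝ) ^ (-(l : ℤ))) ^ n ≤ c ^ (l - good l) * m 0 :=
      (hlowm l (hsmall l hl)).trans (hkey l)
    have hLpos : 0 < D * (γ * (k : ℝ) ^ (-(l : ℤ))) ^ n := by
      have := hrad l; positivity
    have hlog := Real.log_le_log hLpos h1
    rw [Real.log_mul hD.ne' (by positivity), Real.log_pow,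
      Real.log_mul hγ.ne' (by positivity), Real.log_zpow,
      Real.log_mul (by positivity) (hmpos 0).ne', Real.log_pow] at hlog
    push_cast at hlog
    have hlogc : Real.log c = -E := by rw [hEdef]; ring
    rw [hlogc] at hlog
    rw [hCdef]
    nlinarith [hlog]
  -- conclude via liminf comparison
  set A : ℝ := ((n : ℝ) * Real.log k) / E with hAdef
  apply stmt0_liminf_aux (f := fun l : ℕ => 1 - A - (C / E) * (1 / (l : ℝ)))
    (a := 1 - A - (C / E) * 0)
  · filter_upwards [eventually_ge_atTop (max N 1)] with l hl
    have hlN : N ≤ l := le_trans (le_max_left _ _) hl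
    have hl1 : 1 ≤ l := le_trans (le_max_right _ _) hl
    have hlpos : (0 : ℝ) < l := by exact_mod_cast hl1
    have hb := hbad_bound l hlN
    have hbl : ((l - good l : ℕ) : ℝ) = (l : ℝ) - (good l : ℝ) := by
      have := hgood_le l
      push_cast [Nat.cast_sub this]
      ring
    rw [hbl] at hb
    have hgl : (good l : ℝ) / l = 1 - ((l : ℝ) - (good l : ℝ)) / l := by
      field_simp
      ring
    show (1 : ℝ) - A - C / E * (1 / (l : ℝ)) ≤ (good l : ℝ) / (l : ℝ)
    rw [hgl]
    have hbd : ((l : ℝ) - (good l : ℝ)) / l ≤ (C + (n : ℝ) * Real.log k * l) / (E * l) := by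
      rw [div_le_div_iff₀ hlpos (by positivity)]
      calc ((l : ℝ) - (good l : ℝ)) * (E * l) = (((l : ℝ) - (good l : ℝ)) * E) * l := by ring
        _ ≤ (C + (n : ℝ) * Real.log k * l) * l := by
            apply mul_le_mul_of_nonneg_right hb hlpos.le
    have heq : (C + (n : ℝ) * Real.log k * l) / (E * l) = A + (C / E) * (1 / (l : ℝ)) := by
      rw [hAdef]
      field_simp
      ring
    rw [heq] at hbd
    linarith
  · apply Tendsto.sub tendsto_const_nhds
    exact Tendsto.mul tendsto_const_nhds tendsto_one_div_atTop_nhds_zero_nat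
  · filter_upwards [eventually_ge_atTop 1] with l hl
    have hlpos : (0 : ℝ) < l := by exact_mod_cast hl
    rw [div_le_one hlpos]
    exact_mod_cast hgood_le l
  · have hA : A ≤ 1 - p := by
      rw [hAdef, div_le_iff₀ hE0]
      linarith [hE]
    simp only [mul_zero, sub_zero]
    linarith

theorem stmt0 (n k : ℕ) (p : ℝ) (hp : 0 < p) (hp1 : p < 1) :
    ∃ c : ℝ, 0 < c ∧
      ∀ (μ : Measure (EuclideanSpace ℝ (Fin n))) [IsFiniteMeasure μ] (γ : ℝ), 0 < γ →
        ∀ᵐ x ∂μ, p ≤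
          liminf (fun l : ℕ =>
            (((Finset.Icc 1 l).filter (fun j : ℕ =>
              ENNReal.ofReal c * μ (closedBall x (γ * (k : ℝ) ^ (-(j : ℤ) + 1)))
                ≤ μ (closedBall x (γ * (k : ℝ) ^ (-(j : ℤ)))))).card : ℝ) / (l : ℝ)) atTop := by
  have hq : 0 < 1 - p := by linarith
  set e : ℝ := ((n : ℝ) + 1) / (1 - p) with hedef
  have he0 : 0 < e := by positivity
  set c : ℝ := ((k : ℝ) + 2) ^ (-e) with hcdef
  have hkb : (1 : ℝ) < (k : ℝ) + 2 := by
    have : (0 : ℝ) ≤ k := Nat.cast_nonneg k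
    linarith
  have hc : 0 < c := Real.rpow_pos_of_pos (by linarith) _
  have hc1 : c ≤ 1 :=
    Real.rpow_le_one_of_one_le_of_nonpos hkb.le (by linarith)
  refine ⟨c, hc, fun μ _ γ hγ => ?_⟩
  by_cases hk : k ≤ 1
  · -- degenerate case: k = 0 or k = 1; all scales j ≥ 2 are trivially good
    apply ae_of_all
    intro x
    set Q : ℕ → Prop := fun j =>
      ENNReal.ofReal c * μ (closedBall x (γ * (k : ℝ) ^ (-(j : ℤ) + 1)))
        ≤ μ (closedBall x (γ * (k : ℝ) ^ (-(j : ℤ)))) with hQdef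
    have hQ : ∀ j : ℕ, 2 ≤ j → Q j := by
      intro j hj
      have hrads : (k : ℝ) ^ (-(j : ℤ) + 1) = (k : ℝ) ^ (-(j : ℤ)) := by
        interval_cases k
        · simp only [Nat.cast_zero]
          rw [zero_zpow _ (by omega), zero_zpow _ (by omega)]
        · simp only [Nat.cast_one, one_zpow]
      rw [hQdef]
      simp only
      rw [hrads]
      exact mul_le_of_le_one_left (by simp) (ENNReal.ofReal_le_one.mpr hc1)
    apply stmt0_liminf_aux (f := fun l : ℕ => 1 - 1 * (1 / (l : ℝ))) (a := 1 - 1 * 0)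
    · filter_upwards [eventually_ge_atTop 1] with l hl
      have hlpos : (0 : ℝ) < l := by exact_mod_cast hl
      have hsub : Finset.Icc 2 l ⊆ (Finset.Icc 1 l).filter Q := by
        intro j hj
        rw [Finset.mem_Icc] at hj
        rw [Finset.mem_filter, Finset.mem_Icc]
        exact ⟨⟨by omega, hj.2⟩, hQ j hj.1⟩
      have hcard : l - 1 ≤ ((Finset.Icc 1 l).filter Q).card := by
        have h := Finset.card_le_card hsub
        rw [Nat.card_Icc] at h
        omega
      have hcard' : (l : ℝ) - 1 ≤ (((Finset.Icc 1 l).filter Q).card : ℝ) := by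
        have h2 : ((l - 1 : ℕ) : ℝ) = (l : ℝ) - 1 := by
          push_cast [Nat.cast_sub hl]
          ring
        rw [← h2]
        exact_mod_cast hcard
      show (1 : ℝ) - 1 * (1 / (l : ℝ)) ≤ (((Finset.Icc 1 l).filter Q).card : ℝ) / l
      have heq : (1 : ℝ) - 1 * (1 / (l : ℝ)) = ((l : ℝ) - 1) / l := by field_simp
      rw [heq]
      gcongr
    · exact Tendsto.sub tendsto_const_nhds
        (Tendsto.mul tendsto_const_nhds tendsto_one_div_atTop_nhds_zero_nat)
    · filter_upwards [eventually_ge_atTop 1] with l hl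
      have hlpos : (0 : ℝ) < l := by exact_mod_cast hl
      show (((Finset.Icc 1 l).filter Q).card : ℝ) / l ≤ 1
      rw [div_le_one hlpos]
      have h2 : ((Finset.Icc 1 l).filter Q).card ≤ l := by
        have h := Finset.card_filter_le (Finset.Icc 1 l) Q
        rw [Nat.card_Icc] at h
        omega
      exact_mod_cast h2
    · simp
      linarith
  · -- main case: k ≥ 2
    push_neg at hk
    have hk2 : 2 ≤ k := hk
    have hlogc : Real.log c = -e * Real.log ((k : ℝ) + 2) := by
      rw [hcdef, Real.log_rpow (by linarith)]
    have hlogkb : 0 < Real.log ((k : ℝ) + 2) := Real.log_pos hkb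
    have hE0 : 0 < -Real.log c := by
      rw [hlogc]
      have : 0 < e * Real.log ((k : ℝ) + 2) := mul_pos he0 hlogkb
      linarith
    have hE : (n : ℝ) * Real.log k ≤ (1 - p) * (-Real.log c) := by
      rw [hlogc]
      have h1 : (1 - p) * (-(-e * Real.log ((k : ℝ) + 2)))
          = ((n : ℝ) + 1) * Real.log ((k : ℝ) + 2) := by
        rw [hedef]
        field_simp
      rw [h1]
      have hkpos : (0 : ℝ) < k := by
        have : (2 : ℝ) ≤ k := by exact_mod_cast hk2
        linarith
      have h2 : Real.log k ≤ Real.log ((k : ℝ) + 2) :=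
        Real.log_le_log hkpos (by linarith)
      have h3 : 0 ≤ Real.log k := Real.log_nonneg (by
        have : (2 : ℝ) ≤ k := by exact_mod_cast hk2
        linarith)
      nlinarith
    filter_upwards [stmt0_besicovitch_aux n μ] with x hx
    obtain ⟨D, hD, r0, hr0, hlow⟩ := hx
    exact stmt0_pointwise n k hk2 p hp hp1 c hc hE0 hE μ γ hγ x D hD r0 hr0 hlow
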